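/- arXiv:1909.07527 — 3 statements merged into one kernel-verified Lean document; each statement's English description precedes it below -/
import Mathlib

section
/- A sequence (x_n) of real numbers is a Benford sequence if and only if for every m ∈ ℕ, every d_1 ∈ {1,...,9}, and all d_2,...,d_m ∈ {0,...,9}, the limiting proportion lim_{N→∞} #{1 ≤ n ≤ N : D_1(x_n) = d_1, D_2(x_n) = d_2, ..., D_m(x_n) = d_m}/N exists and equals log₁₀(1 + 1/(10^{m-1}·d_1 + 10^{m-2}·d_2 + ... + d_m)). -/
open MeasureTheory Filter

/-- The decimal significand of a real number: for `x ≠ 0`, the unique `t ∈ [1,10)`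
with `|x| = 10 ^ k * t` for some integer `k`; and `S 0 = 0`. -/
noncomputable def S (x : ℝ) : ℝ :=
  if x = 0 then 0 else (10 : ℝ) ^ (Int.fract (Real.logb 10 |x|))

/-- The `m`-th significant decimal digit: `D 1 x = ⌊S x⌋` and for `m ≥ 2`,
`D m x = ⌊10 ^ (m-1) * S x⌋ mod 10` (the uniform formula also gives `D 1`). -/
noncomputable def D (m : ℕ) (x : ℝ) : ℤ :=
  ⌊(10 : ℝ) ^ (m - 1) * S x⌋ % 10

/-- The number of indices `n` with `1 ≤ n ≤ N` satisfying the property `p`. -/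
noncomputable def countIn (N : ℕ) (p : ℕ → Prop) : ℕ :=
  Nat.card {n : ℕ | 1 ≤ n ∧ n ≤ N ∧ p n}

/-- A sequence `(x n)` (indexed by `n ≥ 1`) is Benford if for every `t ∈ [1,10)` the
limiting proportion of indices with `S (x n) ≤ t` equals `log₁₀ t`. -/
def BenfordSeq (x : ℕ → ℝ) : Prop :=
  ∀ t : ℝ, 1 ≤ t → t < 10 →
    Tendsto (fun N : ℕ => (countIn N (fun n => S (x n) ≤ t) : ℝ) / N)
      atTop (nhds (Real.logb 10 t))

/-- A sequence `(y n)` (indexed by `n ≥ 1`) is uniformly distributed modulo one. -/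
def UnifModOne (y : ℕ → ℝ) : Prop :=
  ∀ s : ℝ, 0 ≤ s → s ≤ 1 →
    Tendsto (fun N : ℕ => (countIn N (fun n => Int.fract (y n) ≤ s) : ℝ) / N)
      atTop (nhds s)

/-- A random variable `X` on `(Ω, μ)` is Benford if `P(S(X) ≤ t) = log₁₀ t`
for all `t ∈ [1,10)`. -/
def BenfordRV {Ω : Type*} [MeasurableSpace Ω] (μ : Measure Ω) (X : Ω → ℝ) : Prop :=
  ∀ t : ℝ, 1 ≤ t → t < 10 →
    μ {ω | S (X ω) ≤ t} = ENNReal.ofReal (Real.logb 10 t)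

/-- Two real-valued random variables are identically distributed (equal CDFs). -/
def SameDist {Ω : Type*} [MeasurableSpace Ω] (μ : Measure Ω) (U V : Ω → ℝ) : Prop :=
  ∀ t : ℝ, μ {ω | U ω ≤ t} = μ {ω | V ω ≤ t}

/-- `X` has scale-invariant significant digits: `S (a • X)` and `S X` are identically
distributed for every `a > 0`. -/
def ScaleInvSig {Ω : Type*} [MeasurableSpace Ω] (μ : Measure Ω) (X : Ω → ℝ) : Prop :=
  ∀ a : ℝ, 0 < a → SameDist μ (fun ω => S (a * X ω)) (fun ω => S (X ω))

/-- `X` has base-invariant significant digits: `S (X ^ n)` and `S X` are identically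
distributed for every positive integer `n`. -/
def BaseInvSig {Ω : Type*} [MeasurableSpace Ω] (μ : Measure Ω) (X : Ω → ℝ) : Prop :=
  ∀ n : ℕ, 1 ≤ n → SameDist μ (fun ω => S (X ω ^ n)) (fun ω => S (X ω))

/-- A real number `a` is a rational power of `10` if `a = 10 ^ (m/k)` for some
integers `m, k` with `k ≠ 0`. -/
def IsRatPowTen (a : ℝ) : Prop :=
  ∃ m k : ℤ, k ≠ 0 ∧ a = (10 : ℝ) ^ ((m : ℝ) / (k : ℝ))

section BenfordAux
open Finset
noncomputable def cnt (N : ℕ) (p : ℕ → Prop) : ℕ :=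
  (@Finset.filter _ p (Classical.decPred p) (Finset.Icc 1 N)).card

lemma countIn_eq_cnt (N : ℕ) (p : ℕ → Prop) : countIn N p = cnt N p := by
  classical
  rw [countIn, cnt]
  have : {n : ℕ | 1 ≤ n ∧ n ≤ N ∧ p n} = ↑((Finset.Icc 1 N).filter p) := by
    ext n; simp [Finset.mem_filter, and_assoc]
  rw [this, Nat.card_coe_set_eq, Set.ncard_coe_finset]

noncomputable def dn (N : ℕ) (p : ℕ → Prop) : ℝ := (cnt N p : ℝ) / N

lemma cnt_mono {N : ℕ} {p q : ℕ → Prop} (h : ∀ n, p n → q n) : cnt N p ≤ cnt N q := by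
  classical
  apply Finset.card_le_card
  intro a ha
  simp only [Finset.mem_filter] at *
  exact ⟨ha.1, h _ ha.2⟩

lemma cnt_congr {N : ℕ} {p q : ℕ → Prop} (h : ∀ n, p n ↔ q n) : cnt N p = cnt N q := by
  classical
  unfold cnt
  congr 1
  apply Finset.filter_congr
  intro a _; exact h a

lemma cnt_le (N : ℕ) (p : ℕ → Prop) : cnt N p ≤ N := by
  classical
  calc cnt N p ≤ (Finset.Icc 1 N).card := Finset.card_filter_le _ _
  _ = N := by rw [Nat.card_Icc]; omega

lemma cnt_add_disjoint {N : ℕ} {p q : ℕ → Prop} (h : ∀ n, ¬(p n ∧ q n)) :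
    cnt N (fun n => p n ∨ q n) = cnt N p + cnt N q := by
  classical
  unfold cnt
  rw [← Finset.card_union_of_disjoint]
  · congr 1
    ext a; simp [Finset.mem_filter, Finset.mem_union, and_or_left]
  · rw [Finset.disjoint_left]
    intro a ha hb
    simp only [Finset.mem_filter] at ha hb
    exact h a ⟨ha.2, hb.2⟩

lemma cnt_compl (N : ℕ) (p : ℕ → Prop) : cnt N p + cnt N (fun n => ¬ p n) = N := by
  classical
  unfold cnt
  rw [Finset.card_filter_add_card_filter_not, Nat.card_Icc]
  omega

lemma dn_nonneg (N : ℕ) (p : ℕ → Prop) : 0 ≤ dn N p := by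
  unfold dn; positivity

lemma dn_le_one (N : ℕ) (p : ℕ → Prop) : dn N p ≤ 1 := by
  unfold dn
  rcases Nat.eq_zero_or_pos N with h | h
  · simp [h]
  · rw [div_le_one (by exact_mod_cast h)]
    exact_mod_cast cnt_le N p

lemma dn_mono {N : ℕ} {p q : ℕ → Prop} (h : ∀ n, p n → q n) : dn N p ≤ dn N q := by
  unfold dn
  gcongr
  exact_mod_cast cnt_mono h

lemma dn_congr {N : ℕ} {p q : ℕ → Prop} (h : ∀ n, p n ↔ q n) : dn N p = dn N q := by
  unfold dn; rw [cnt_congr h]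

lemma dn_add_disjoint {N : ℕ} {p q : ℕ → Prop} (h : ∀ n, ¬(p n ∧ q n)) :
    dn N (fun n => p n ∨ q n) = dn N p + dn N q := by
  unfold dn
  rw [cnt_add_disjoint h, ← add_div]
  norm_num

lemma dn_sub {N : ℕ} {p q : ℕ → Prop} (h : ∀ n, q n → p n) :
    dn N (fun n => p n ∧ ¬ q n) = dn N p - dn N q := by
  have key : dn N (fun n => (p n ∧ ¬ q n) ∨ q n) = dn N (fun n => p n ∧ ¬ q n) + dn N q :=
    dn_add_disjoint (by tauto)
  have e : dn N (fun n => (p n ∧ ¬ q n) ∨ q n) = dn N p := dn_congr (by tauto)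
  linarith [key, e]

lemma dn_add_le {N : ℕ} {p q r : ℕ → Prop} (h : ∀ n, p n → q n ∨ r n) :
    dn N p ≤ dn N q + dn N r := by
  have e1 : dn N (fun n => q n ∨ r n) = dn N (fun n => q n ∨ (r n ∧ ¬ q n)) :=
    dn_congr (by tauto)
  have e2 : dn N (fun n => q n ∨ (r n ∧ ¬ q n)) = dn N q + dn N (fun n => r n ∧ ¬ q n) :=
    dn_add_disjoint (by tauto)
  have e3 : dn N (fun n => r n ∧ ¬ q n) ≤ dn N r := dn_mono (by tauto)
  have e4 : dn N p ≤ dn N (fun n => q n ∨ r n) := dn_mono h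
  linarith

-- limit helpers
lemma limsup_dens_le {g : ℕ → ℝ} {c : ℝ} {p : ℕ → Prop}
    (hle : ∀ N, dn N p ≤ g N) (hg : Tendsto g atTop (nhds c)) :
    limsup (fun N => dn N p) atTop ≤ c := by
  have h1 : limsup (fun N => dn N p) atTop ≤ limsup g atTop := by
    exact limsup_le_limsup (Eventually.of_forall hle)
      (IsBoundedUnder.isCoboundedUnder_le (isBoundedUnder_of ⟨0, fun N => dn_nonneg N p⟩))
      hg.isBoundedUnder_le
  rw [hg.limsup_eq] at h1
  exact h1

lemma le_liminf_dens {g : ℕ → ℝ} {c : ℝ} {p : ℕ → Prop}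
    (hle : ∀ N, g N ≤ dn N p) (hg : Tendsto g atTop (nhds c)) :
    c ≤ liminf (fun N => dn N p) atTop := by
  have h1 : liminf g atTop ≤ liminf (fun N => dn N p) atTop := by
    exact liminf_le_liminf (Eventually.of_forall hle)
      hg.isBoundedUnder_ge
      (IsBoundedUnder.isCoboundedUnder_ge (isBoundedUnder_of ⟨1, fun N => dn_le_one N p⟩))
  rw [hg.liminf_eq] at h1
  exact h1

lemma tendsto_dens_of_liminf_limsup {p : ℕ → Prop} {c : ℝ}
    (h1 : c ≤ liminf (fun N => dn N p) atTop)
    (h2 : limsup (fun N => dn N p) atTop ≤ c) :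
    Tendsto (fun N => dn N p) atTop (nhds c) := by
  refine tendsto_of_le_liminf_of_limsup_le h1 h2 ?_ ?_
  · exact isBoundedUnder_of ⟨1, fun N => dn_le_one N p⟩
  · exact isBoundedUnder_of ⟨0, fun N => dn_nonneg N p⟩

-- S basics
lemma S_nonneg (x : ℝ) : 0 ≤ S x := by
  unfold S
  split
  · norm_num
  · positivity

lemma S_lt_ten (x : ℝ) : S x < 10 := by
  unfold S
  split
  · norm_num
  · have h : (10:ℝ) ^ Int.fract (Real.logb 10 |x|) < 10 ^ (1:ℝ) := by
      rw [Real.rpow_lt_rpow_left_iff (by norm_num : (1:ℝ) < 10)]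
      exact Int.fract_lt_one _
    simpa using h

lemma S_cases (x : ℝ) : S x = 0 ∨ 1 ≤ S x := by
  unfold S
  split
  · exact Or.inl rfl
  · right
    have h : (10:ℝ) ^ (0:ℝ) ≤ 10 ^ Int.fract (Real.logb 10 |x|) := by
      rw [Real.rpow_le_rpow_left_iff (by norm_num : (1:ℝ) < 10)]
      exact Int.fract_nonneg _
    simpa using h

lemma floor_bounds (x : ℝ) : 0 ≤ ⌊S x⌋ ∧ ⌊S x⌋ < 10 := by
  constructor
  · exact Int.floor_nonneg.mpr (S_nonneg x)
  · exact Int.floor_lt.mpr (by exact_mod_cast S_lt_ten x)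

lemma floor_ten_mul (y : ℝ) : ⌊(10:ℝ) * y⌋ = 10 * ⌊y⌋ + ⌊10 * Int.fract y⌋ := by
  have h : (10:ℝ) * y = 10 * Int.fract y + ((10 * ⌊y⌋ : ℤ) : ℝ) := by
    rw [Int.fract]
    push_cast
    ring
  rw [h, Int.floor_add_intCast]
  ring

lemma floor_sum (x : ℝ) : ∀ p : ℕ,
    ⌊(10:ℝ)^p * S x⌋ = ∑ j ∈ Finset.Icc 1 (p+1), D j x * 10^(p+1-j) := by
  intro p
  induction p with
  | zero =>
    simp only [pow_zero, one_mul]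
    rw [show Finset.Icc 1 1 = {1} from rfl]
    simp only [Finset.sum_singleton]
    have hD : D 1 x = ⌊S x⌋ := by
      unfold D
      norm_num
      exact Int.emod_emod_of_dvd _ (dvd_refl _) ▸ Int.emod_eq_of_lt (floor_bounds x).1 (floor_bounds x).2
    rw [hD]
    simp
  | succ p ih =>
    have key : ⌊(10:ℝ)^(p+1) * S x⌋ = 10 * ⌊(10:ℝ)^p * S x⌋ + D (p+2) x := by
      have h1 : (10:ℝ)^(p+1) * S x = 10 * ((10:ℝ)^p * S x) := by ring
      rw [h1, floor_ten_mul]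
      have hD : D (p+2) x = ⌊10 * Int.fract ((10:ℝ)^p * S x)⌋ := by
        unfold D
        have : (p+2-1 : ℕ) = p+1 := by omega
        rw [this]
        rw [h1, floor_ten_mul]
        have h0 : 0 ≤ ⌊10 * Int.fract ((10:ℝ)^p * S x)⌋ :=
          Int.floor_nonneg.mpr (mul_nonneg (by norm_num) (Int.fract_nonneg _))
        have h10 : ⌊10 * Int.fract ((10:ℝ)^p * S x)⌋ < 10 := by
          apply Int.floor_lt.mpr
          push_cast
          nlinarith [Int.fract_lt_one ((10:ℝ)^p * S x)]
        rw [add_comm, Int.add_mul_emod_self_left]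
        exact Int.emod_eq_of_lt h0 h10
      rw [hD]
    rw [key, ih]
    rw [Finset.sum_Icc_succ_top (by omega : 1 ≤ p+1+1)]
    rw [Finset.mul_sum]
    have : ∀ j ∈ Finset.Icc 1 (p+1), D j x * 10^(p+1+1-j) = 10 * (D j x * 10^(p+1-j)) := by
      intro j hj
      simp only [Finset.mem_Icc] at hj
      have : (p+1+1-j : ℕ) = (p+1-j)+1 := by omega
      rw [this, pow_succ]
      ring
    rw [Finset.sum_congr rfl this]
    simp

lemma sum_Ioc_rev {M : Type*} [AddCommMonoid M] (f : ℕ → M) (j m : ℕ) :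
    ∑ i ∈ Finset.Ioc j m, f (m - i) = ∑ k ∈ Finset.range (m - j), f k := by
  apply Finset.sum_nbij' (fun i => m - i) (fun k => m - k)
  · intro a ha; simp only [Finset.mem_Ioc, Finset.mem_range] at *; omega
  · intro a ha; simp only [Finset.mem_Ioc, Finset.mem_range] at *; omega
  · intro a ha; simp only [Finset.mem_Ioc] at ha; omega
  · intro a ha; simp only [Finset.mem_range] at ha; omega
  · intro a _; rfl

lemma geom_nat (n : ℕ) : ∑ k ∈ Finset.range n, 9 * 10^k = 10^n - 1 := by
  induction n with
  | zero => simp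
  | succ n ih =>
    rw [Finset.sum_range_succ, ih]
    have : (1:ℕ) ≤ 10^n := Nat.one_le_pow _ _ (by norm_num)
    ring_nf
    omega

lemma digit_extract (m : ℕ) (d : ℕ → ℕ) (hd : ∀ i, 1 ≤ i → i ≤ m → d i ≤ 9)
    (j : ℕ) (hj1 : 1 ≤ j) (hjm : j ≤ m) :
    (∑ i ∈ Finset.Icc 1 m, d i * 10^(m-i)) / 10^(m-j) % 10 = d j := by
  have hIcc : ∀ k, Finset.Icc 1 k = Finset.Ioc 0 k := fun k => Finset.Icc_add_one_left_eq_Ioc 0 k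
  rw [hIcc]
  rw [← Finset.sum_Ioc_consecutive _ (by omega : 0 ≤ j) hjm]
  have hA : ∑ i ∈ Finset.Ioc 0 j, d i * 10^(m-i)
      = 10^(m-j) * ∑ i ∈ Finset.Ioc 0 j, d i * 10^(j-i) := by
    rw [Finset.mul_sum]
    apply Finset.sum_congr rfl
    intro i hi
    simp only [Finset.mem_Ioc] at hi
    have : (m - i : ℕ) = (j - i) + (m - j) := by omega
    rw [this, pow_add]
    ring
  have hB : ∑ i ∈ Finset.Ioc j m, d i * 10^(m-i) < 10^(m-j) := by
    have h1 : ∑ i ∈ Finset.Ioc j m, d i * 10^(m-i) ≤ ∑ i ∈ Finset.Ioc j m, 9 * 10^(m-i) := by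
      apply Finset.sum_le_sum
      intro i hi
      simp only [Finset.mem_Ioc] at hi
      exact Nat.mul_le_mul_right _ (hd i (by omega) hi.2)
    have h2 : ∑ i ∈ Finset.Ioc j m, 9 * 10^(m-i) = 10^(m-j) - 1 := by
      rw [show (∑ i ∈ Finset.Ioc j m, 9 * 10^(m-i)) = ∑ i ∈ Finset.Ioc j m, (fun k => 9 * 10^k) (m-i) from rfl]
      rw [sum_Ioc_rev (fun k => 9 * 10^k) j m, geom_nat]
    have h3 : (1:ℕ) ≤ 10^(m-j) := Nat.one_le_pow _ _ (by norm_num)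
    omega
  rw [hA, Nat.mul_add_div (Nat.pow_pos (by norm_num)), Nat.div_eq_of_lt hB, add_zero]
  obtain ⟨j', rfl⟩ : ∃ j', j = j' + 1 := ⟨j - 1, by omega⟩
  rw [show Finset.Ioc 0 (j'+1) = Finset.Ioc 0 (j'+1) from rfl, Finset.sum_Ioc_succ_top (by omega)]
  have h4 : ∑ i ∈ Finset.Ioc 0 j', d i * 10^(j'+1-i) = 10 * ∑ i ∈ Finset.Ioc 0 j', d i * 10^(j'-i) := by
    rw [Finset.mul_sum]
    apply Finset.sum_congr rfl
    intro i hi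
    simp only [Finset.mem_Ioc] at hi
    have : (j'+1-i : ℕ) = (j'-i) + 1 := by omega
    rw [this, pow_succ]
    ring
  rw [h4]
  simp only [Nat.sub_self, pow_zero, mul_one]
  rw [Nat.mul_add_mod]
  exact Nat.mod_eq_of_lt (by have := hd (j'+1) (by omega) hjm; omega)

lemma digit_reconstruct_range (K : ℕ) : ∀ m, ∑ i ∈ Finset.range m, (K / 10^i % 10) * 10^i = K % 10^m := by
  intro m
  induction m with
  | zero => simp [Nat.mod_one]
  | succ m ih =>
    rw [Finset.sum_range_succ, ih, pow_succ, Nat.mod_mul]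
    ring

lemma digit_reconstruct (m : ℕ) (K : ℕ) (hK : K < 10^m) :
    ∑ j ∈ Finset.Icc 1 m, (K / 10^(m-j) % 10) * 10^(m-j) = K := by
  have hIcc : Finset.Icc 1 m = Finset.Ioc 0 m := Finset.Icc_add_one_left_eq_Ioc 0 m
  rw [hIcc]
  rw [show (∑ j ∈ Finset.Ioc 0 m, (K / 10^(m-j) % 10) * 10^(m-j))
      = ∑ j ∈ Finset.Ioc 0 m, (fun k => (K / 10^k % 10) * 10^k) (m-j) from rfl]
  rw [sum_Ioc_rev (fun k => (K / 10^k % 10) * 10^k) 0 m]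
  simp only [Nat.sub_zero]
  rw [digit_reconstruct_range K m]
  exact Nat.mod_eq_of_lt hK

lemma floor_div_nat' (a : ℝ) (n : ℕ) (hn : 0 < n) : ⌊a / (n:ℝ)⌋ = ⌊a⌋ / (n:ℤ) := by
  have hn' : (0:ℝ) < (n:ℝ) := by exact_mod_cast hn
  have hnz : (n:ℤ) ≠ 0 := by exact_mod_cast hn.ne'
  set z : ℤ := ⌊a⌋ / (n:ℤ) with hz
  have hdm : (n:ℤ) * z + ⌊a⌋ % (n:ℤ) = ⌊a⌋ := by rw [hz]; exact Int.mul_ediv_add_emod ⌊a⌋ (n:ℤ)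
  have hr0 : 0 ≤ ⌊a⌋ % (n:ℤ) := Int.emod_nonneg _ hnz
  have hrn : ⌊a⌋ % (n:ℤ) < (n:ℤ) := Int.emod_lt_of_pos _ (by exact_mod_cast hn)
  rw [Int.floor_eq_iff]
  constructor
  · rw [le_div_iff₀ hn']
    have h1 : (z * n : ℤ) ≤ ⌊a⌋ := by nlinarith
    have h2 : ((z * n : ℤ) : ℝ) ≤ a := le_trans (by exact_mod_cast h1) (Int.floor_le a)
    push_cast at h2
    linarith
  · rw [div_lt_iff₀ hn']
    have h1 : ⌊a⌋ < (z + 1) * n := by nlinarith [hdm, hrn]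
    have h2 : a < ((⌊a⌋ + 1 : ℤ) : ℝ) := by exact_mod_cast Int.lt_floor_add_one a
    have h3 : ((⌊a⌋ + 1 : ℤ) : ℝ) ≤ (((z+1) * n : ℤ) : ℝ) := by exact_mod_cast h1
    push_cast at h2 h3
    linarith

lemma digits_iff (x : ℝ) (p : ℕ) (d : ℕ → ℕ) (hd : ∀ i, 1 ≤ i → i ≤ p+1 → d i ≤ 9) :
    (∀ j, 1 ≤ j → j ≤ p+1 → D j x = (d j : ℤ)) ↔
      ⌊(10:ℝ)^p * S x⌋ = ((∑ i ∈ Finset.Icc 1 (p+1), d i * 10^(p+1-i) : ℕ) : ℤ) := by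
  constructor
  · intro h
    rw [floor_sum x p]
    push_cast
    apply Finset.sum_congr rfl
    intro j hj
    simp only [Finset.mem_Icc] at hj
    rw [h j hj.1 hj.2]
  · intro hK j hj1 hj2
    have hpow : (10:ℝ)^(j-1) * S x = ((10:ℝ)^p * S x) / ((10^(p+1-j) : ℕ) : ℝ) := by
      have h10 : (10:ℝ)^p = 10^(j-1) * 10^(p+1-j) := by
        rw [← pow_add]; congr 1; omega
      push_cast
      rw [h10]
      field_simp
    unfold D
    rw [hpow, floor_div_nat' _ _ (Nat.pow_pos (by norm_num)), hK]
    have := digit_extract (p+1) d hd j hj1 hj2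
    rw [← this]
    push_cast
    rfl

noncomputable def BenfordSeq' (x : ℕ → ℝ) : Prop :=
  ∀ t : ℝ, 1 ≤ t → t < 10 →
    Tendsto (fun N : ℕ => (cnt N (fun n => S (x n) ≤ t) : ℝ) / N)
      atTop (nhds (Real.logb 10 t))

lemma continuousAt_logb' {t : ℝ} (ht : t ≠ 0) : ContinuousAt (Real.logb 10) t :=
  Real.continuousAt_logb ht

lemma tendsto_dn_le {x : ℕ → ℝ} (hB : ∀ t : ℝ, 1 ≤ t → t < 10 →
      Tendsto (fun N : ℕ => dn N (fun n => S (x n) ≤ t)) atTop (nhds (Real.logb 10 t)))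
    {t : ℝ} (ht1 : 1 ≤ t) (ht10 : t ≤ 10) :
    Tendsto (fun N : ℕ => dn N (fun n => S (x n) < t)) atTop (nhds (Real.logb 10 t)) := by
  apply tendsto_dens_of_liminf_limsup
  · -- logb t ≤ liminf
    rcases eq_or_lt_of_le ht1 with h | h
    · rw [← h]
      simp only [Real.logb_one]
      exact le_liminf_dens (g := fun _ => 0) (fun N => dn_nonneg N _) tendsto_const_nhds
    · set u : ℕ → ℝ := fun k => t - (t-1)/(k+1) with hu
      have hu1 : ∀ k : ℕ, 1 ≤ u k := by
        intro k
        have : (t-1)/((k:ℝ)+1) ≤ t-1 := div_le_self (by linarith) (by linarith [Nat.cast_nonneg (α := ℝ) k])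
        simp only [hu]
        linarith
      have hult : ∀ k : ℕ, u k < t := by
        intro k
        have : (0:ℝ) < (t-1)/((k:ℝ)+1) := div_pos (by linarith) (by positivity)
        simp only [hu]
        linarith
      have hutend : Tendsto u atTop (nhds t) := by
        have h1 : Tendsto (fun k : ℕ => ((k:ℝ)+1)) atTop atTop :=
          tendsto_atTop_add_const_right _ 1 tendsto_natCast_atTop_atTop
      -- (t-1)/(k+1) → 0
        have h2 : Tendsto (fun k : ℕ => (t-1)/((k:ℝ)+1)) atTop (nhds 0) :=
          Tendsto.div_atTop tendsto_const_nhds h1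
        have h3 := h2.const_sub t
        simpa using h3
      have hltend : Tendsto (fun k => Real.logb 10 (u k)) atTop (nhds (Real.logb 10 t)) :=
        (continuousAt_logb' (by linarith)).tendsto.comp hutend
      apply le_of_tendsto' hltend
      intro k
      exact le_liminf_dens
        (fun N => dn_mono (fun n hn => lt_of_le_of_lt hn (hult k)))
        (hB (u k) (hu1 k) (lt_of_lt_of_le (hult k) ht10))
  · -- limsup ≤ logb t
    rcases lt_or_eq_of_le ht10 with h | h
    · exact limsup_dens_le (fun N => dn_mono (fun n hn => le_of_lt hn)) (hB t ht1 h)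
    · have h1 : Real.logb 10 t = 1 := by rw [h]; exact Real.logb_self_eq_one (by norm_num)
      rw [h1]
      exact limsup_dens_le (g := fun _ => 1) (fun N => dn_le_one N _) tendsto_const_nhds

lemma tendsto_dn_interval {x : ℕ → ℝ} (hB : ∀ t : ℝ, 1 ≤ t → t < 10 →
      Tendsto (fun N : ℕ => dn N (fun n => S (x n) ≤ t)) atTop (nhds (Real.logb 10 t)))
    {a b : ℝ} (ha : 1 ≤ a) (hab : a ≤ b) (hb : b ≤ 10) :
    Tendsto (fun N : ℕ => dn N (fun n => a ≤ S (x n) ∧ S (x n) < b)) atTop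
      (nhds (Real.logb 10 b - Real.logb 10 a)) := by
  have key : ∀ N, dn N (fun n => a ≤ S (x n) ∧ S (x n) < b)
      = dn N (fun n => S (x n) < b) - dn N (fun n => S (x n) < a) := by
    intro N
    rw [← dn_sub (fun n hn => lt_of_lt_of_le hn hab)]
    apply dn_congr
    intro n
    rw [not_lt]
    tauto
  simp only [key]
  exact (tendsto_dn_le hB (le_trans ha hab) hb).sub (tendsto_dn_le hB ha (le_trans hab hb))

lemma sum_nine (m : ℕ) : ∑ i ∈ Finset.Icc 1 m, 9 * 10^(m-i) = 10^m - 1 := by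
  rw [show Finset.Icc 1 m = Finset.Ioc 0 m from Finset.Icc_add_one_left_eq_Ioc 0 m]
  rw [show (∑ i ∈ Finset.Ioc 0 m, 9 * 10^(m-i))
      = ∑ i ∈ Finset.Ioc 0 m, (fun k => 9 * 10^k) (m-i) from rfl]
  rw [sum_Ioc_rev (fun k => 9 * 10^k) 0 m]
  simp only [Nat.sub_zero]
  exact geom_nat m

lemma K_bounds (p : ℕ) (d : ℕ → ℕ) (hd1 : 1 ≤ d 1) (hd : ∀ i, 1 ≤ i → i ≤ p+1 → d i ≤ 9) :
    10^p ≤ (∑ i ∈ Finset.Icc 1 (p+1), d i * 10^(p+1-i)) ∧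
    (∑ i ∈ Finset.Icc 1 (p+1), d i * 10^(p+1-i)) < 10^(p+1) := by
  constructor
  · calc (10:ℕ)^p = 1 * 10^(p+1-1) := by norm_num
    _ ≤ d 1 * 10^(p+1-1) := Nat.mul_le_mul_right _ hd1
    _ ≤ ∑ i ∈ Finset.Icc 1 (p+1), d i * 10^(p+1-i) :=
        Finset.single_le_sum (f := fun i => d i * 10^(p+1-i)) (fun i _ => Nat.zero_le _) (Finset.mem_Icc.mpr ⟨le_refl 1, by omega⟩)
  · have h1 : (∑ i ∈ Finset.Icc 1 (p+1), d i * 10^(p+1-i))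
        ≤ ∑ i ∈ Finset.Icc 1 (p+1), 9 * 10^(p+1-i) := by
      apply Finset.sum_le_sum
      intro i hi
      simp only [Finset.mem_Icc] at hi
      exact Nat.mul_le_mul_right _ (hd i hi.1 hi.2)
    rw [sum_nine] at h1
    have h2 : (1:ℕ) ≤ 10^(p+1) := Nat.one_le_pow _ _ (by norm_num)
    omega

lemma floor_block_iff (p K : ℕ) (y : ℝ) (hK1 : 10^p ≤ K) :
    ⌊(10:ℝ)^p * y⌋ = (K:ℤ) ↔ ((K:ℝ)/10^p ≤ y ∧ y < ((K:ℝ)+1)/10^p) := by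
  have hp : (0:ℝ) < 10^p := by positivity
  rw [Int.floor_eq_iff]
  constructor
  · rintro ⟨h1, h2⟩
    constructor
    · rw [div_le_iff₀ hp]; push_cast at h1 ⊢; linarith
    · rw [lt_div_iff₀ hp]; push_cast at h2 ⊢; linarith
  · rintro ⟨h1, h2⟩
    rw [div_le_iff₀ hp] at h1
    rw [lt_div_iff₀ hp] at h2
    constructor
    · push_cast at h1 ⊢; linarith
    · push_cast at h2 ⊢; linarith

lemma forward_block {x : ℕ → ℝ}
    (hB : ∀ t : ℝ, 1 ≤ t → t < 10 →
      Tendsto (fun N : ℕ => dn N (fun n => S (x n) ≤ t)) atTop (nhds (Real.logb 10 t)))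
    (p : ℕ) (d : ℕ → ℕ) (hd1 : 1 ≤ d 1) (hd : ∀ i, 1 ≤ i → i ≤ p+1 → d i ≤ 9) :
    Tendsto (fun N : ℕ => dn N (fun n => ∀ j, 1 ≤ j → j ≤ p+1 → D j (x n) = (d j : ℤ)))
      atTop (nhds (Real.logb 10 (((∑ i ∈ Finset.Icc 1 (p+1), d i * 10^(p+1-i) : ℕ) : ℝ) + 1)
        - Real.logb 10 ((∑ i ∈ Finset.Icc 1 (p+1), d i * 10^(p+1-i) : ℕ) : ℝ))) := by
  set K : ℕ := ∑ i ∈ Finset.Icc 1 (p+1), d i * 10^(p+1-i) with hKdef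
  obtain ⟨hK1, hK2⟩ := K_bounds p d hd1 hd
  have hp : (0:ℝ) < 10^p := by positivity
  have hKr1 : (10:ℝ)^p ≤ (K:ℝ) := by exact_mod_cast hK1
  have hKr2 : (K:ℝ) + 1 ≤ 10^(p+1) := by
    have : (K:ℕ) + 1 ≤ 10^(p+1) := hK2
    exact_mod_cast this
  set a : ℝ := (K:ℝ)/10^p with hadef
  set b : ℝ := ((K:ℝ)+1)/10^p with hbdef
  have hcong : ∀ N, dn N (fun n => ∀ j, 1 ≤ j → j ≤ p+1 → D j (x n) = (d j : ℤ))
      = dn N (fun n => a ≤ S (x n) ∧ S (x n) < b) := by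
    intro N
    apply dn_congr
    intro n
    rw [digits_iff (x n) p d hd, floor_block_iff p K (S (x n)) hK1]
  have ha : 1 ≤ a := by rw [hadef, le_div_iff₀ hp]; linarith
  have hab : a ≤ b := by rw [hadef, hbdef]; gcongr; linarith
  have hb : b ≤ 10 := by
    rw [hbdef, div_le_iff₀ hp]
    calc (K:ℝ) + 1 ≤ 10^(p+1) := hKr2
    _ = 10 * 10^p := by ring
  have := tendsto_dn_interval hB ha hab hb
  simp only [hcong]
  convert this using 2
  have hK0 : (0:ℝ) < (K:ℝ) := by
    have : (0:ℕ) < K := lt_of_lt_of_le (Nat.pow_pos (by norm_num)) hK1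
    exact_mod_cast this
  rw [hbdef, hadef, Real.logb_div (by linarith) (by positivity),
    Real.logb_div (by linarith) (by positivity)]
  ring

lemma dn_false (N : ℕ) : dn N (fun _ : ℕ => False) = 0 := by
  have h : cnt N (fun _ : ℕ => False) = 0 := by
    have h1 : cnt N (fun _ : ℕ => False ∨ False) = cnt N (fun _ : ℕ => False) + cnt N (fun _ : ℕ => False) :=
      cnt_add_disjoint (by tauto)
    have h2 : cnt N (fun _ : ℕ => False ∨ False) = cnt N (fun _ : ℕ => False) :=
      cnt_congr (by tauto)
    omega
  unfold dn
  rw [h]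
  simp

lemma reverse_block {x : ℕ → ℝ}
    (hyp : ∀ m : ℕ, 1 ≤ m → ∀ d : ℕ → ℕ, 1 ≤ d 1 → d 1 ≤ 9 →
      (∀ j, 2 ≤ j → j ≤ m → d j ≤ 9) →
      Tendsto (fun N => dn N (fun n => ∀ j, 1 ≤ j → j ≤ m → D j (x n) = (d j : ℤ))) atTop
        (nhds (Real.logb 10 (1 + 1 / ∑ j ∈ Finset.Icc 1 m, (10:ℝ)^(m-j) * (d j : ℝ)))))
    (p K : ℕ) (hK1 : 10^p ≤ K) (hK2 : K < 10^(p+1)) :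
    Tendsto (fun N => dn N (fun n => ⌊(10:ℝ)^p * S (x n)⌋ = (K:ℤ))) atTop
      (nhds (Real.logb 10 ((K:ℝ)+1) - Real.logb 10 (K:ℝ))) := by
  set d : ℕ → ℕ := fun j => K / 10^(p+1-j) % 10 with hd
  have hd9 : ∀ j, d j ≤ 9 := by
    intro j
    simp only [hd]
    have := Nat.mod_lt (K / 10^(p+1-j)) (show 0 < 10 by norm_num)
    omega
  have hq : d 1 = K / 10^p := by
    rw [hd]
    simp only [Nat.add_sub_cancel]
    apply Nat.mod_eq_of_lt
    rw [Nat.div_lt_iff_lt_mul (Nat.pow_pos (by norm_num))]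
    calc K < 10^(p+1) := hK2
    _ = 10 * 10^p := by ring
  have hd1 : 1 ≤ d 1 := by
    rw [hq, Nat.le_div_iff_mul_le (Nat.pow_pos (by norm_num))]
    simpa using hK1
  have hsum : ∑ i ∈ Finset.Icc 1 (p+1), d i * 10^(p+1-i) = K :=
    digit_reconstruct (p+1) K hK2
  have h := hyp (p+1) (by omega) d hd1 (hd9 1) (fun j _ _ => hd9 j)
  have hcong : ∀ N, dn N (fun n => ∀ j, 1 ≤ j → j ≤ p+1 → D j (x n) = (d j : ℤ))
      = dn N (fun n => ⌊(10:ℝ)^p * S (x n)⌋ = (K:ℤ)) := by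
    intro N
    apply dn_congr
    intro n
    rw [digits_iff (x n) p d (fun i _ hi => hd9 i), hsum]
  have hval : Real.logb 10 (1 + 1 / ∑ j ∈ Finset.Icc 1 (p+1), (10:ℝ)^(p+1-j) * (d j : ℝ))
      = Real.logb 10 ((K:ℝ)+1) - Real.logb 10 (K:ℝ) := by
    have hKpos : (0:ℕ) < K := lt_of_lt_of_le (Nat.pow_pos (by norm_num)) hK1
    have hKr : (0:ℝ) < (K:ℝ) := by exact_mod_cast hKpos
    have hsr : ∑ j ∈ Finset.Icc 1 (p+1), (10:ℝ)^(p+1-j) * (d j : ℝ) = (K:ℝ) := by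
      rw [← hsum]
      push_cast
      apply Finset.sum_congr rfl
      intro i _
      ring
    rw [hsr]
    have : 1 + 1/(K:ℝ) = ((K:ℝ)+1)/(K:ℝ) := by field_simp
    rw [this, Real.logb_div (by linarith) (by linarith)]
  rw [hval] at h
  simp only [hcong] at h
  exact h

lemma reverse_fam {x : ℕ → ℝ}
    (hyp : ∀ m : ℕ, 1 ≤ m → ∀ d : ℕ → ℕ, 1 ≤ d 1 → d 1 ≤ 9 →
      (∀ j, 2 ≤ j → j ≤ m → d j ≤ 9) →
      Tendsto (fun N => dn N (fun n => ∀ j, 1 ≤ j → j ≤ m → D j (x n) = (d j : ℤ))) atTop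
        (nhds (Real.logb 10 (1 + 1 / ∑ j ∈ Finset.Icc 1 m, (10:ℝ)^(m-j) * (d j : ℝ)))))
    (p : ℕ) : ∀ L : ℕ, 10^p ≤ L → L ≤ 10^(p+1) →
    Tendsto (fun N => dn N (fun n =>
        ((10^p : ℕ) : ℤ) ≤ ⌊(10:ℝ)^p * S (x n)⌋ ∧ ⌊(10:ℝ)^p * S (x n)⌋ < (L:ℤ))) atTop
      (nhds (Real.logb 10 (L:ℝ) - Real.logb 10 ((10^p : ℕ) : ℝ))) := by
  intro L hbase
  induction L, hbase using Nat.le_induction with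
  | base =>
    intro _
    have heq : ∀ N, dn N (fun n =>
        ((10^p : ℕ) : ℤ) ≤ ⌊(10:ℝ)^p * S (x n)⌋ ∧ ⌊(10:ℝ)^p * S (x n)⌋ < ((10^p : ℕ) : ℤ))
        = dn N (fun _ => False) := by
      intro N
      apply dn_congr
      intro n
      simp only [iff_false]
      rintro ⟨h1, h2⟩
      exact absurd (lt_of_le_of_lt h1 h2) (lt_irrefl _)
    simp only [heq, dn_false, sub_self]
    exact tendsto_const_nhds
  | succ L hL ih =>
    intro hL1
    have h1 := ih (by omega)
    have h2 := reverse_block hyp p L hL (by omega)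
    have heq : ∀ N, dn N (fun n =>
        ((10^p : ℕ) : ℤ) ≤ ⌊(10:ℝ)^p * S (x n)⌋ ∧ ⌊(10:ℝ)^p * S (x n)⌋ < ((L+1 : ℕ) : ℤ))
        = dn N (fun n =>
          ((10^p : ℕ) : ℤ) ≤ ⌊(10:ℝ)^p * S (x n)⌋ ∧ ⌊(10:ℝ)^p * S (x n)⌋ < (L:ℤ))
          + dn N (fun n => ⌊(10:ℝ)^p * S (x n)⌋ = (L:ℤ)) := by
      intro N
      rw [← dn_add_disjoint (by
        rintro n ⟨⟨_, hlt⟩, heq2⟩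
        rw [heq2] at hlt
        exact lt_irrefl _ hlt)]
      apply dn_congr
      intro n
      constructor
      · rintro ⟨ha, hb⟩
        have hb' : ⌊(10:ℝ)^p * S (x n)⌋ ≤ (L:ℤ) := by
          have : ((L+1 : ℕ) : ℤ) = (L:ℤ) + 1 := by push_cast; ring
          rw [this] at hb
          exact Int.lt_add_one_iff.mp hb
        rcases lt_or_eq_of_le hb' with h | h
        · exact Or.inl ⟨ha, h⟩
        · exact Or.inr h
      · rintro (⟨ha, hb⟩ | h)
        · refine ⟨ha, ?_⟩
          have : ((L+1 : ℕ) : ℤ) = (L:ℤ) + 1 := by push_cast; ring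
          rw [this]
          omega
        · constructor
          · rw [h]; exact_mod_cast hL
          · rw [h]; push_cast; omega
    simp only [heq]
    have h3 := h1.add h2
    convert h3 using 2
    push_cast
    ring

lemma dn_zero (p : ℕ → Prop) : dn 0 p = 0 := by
  unfold dn
  simp

lemma dn_compl {N : ℕ} (hN : 1 ≤ N) (p : ℕ → Prop) : dn N (fun n => ¬ p n) = 1 - dn N p := by
  have h := cnt_compl N p
  have hNr : (0:ℝ) < N := by exact_mod_cast hN
  unfold dn
  have h2 : (cnt N (fun n => ¬ p n) : ℝ) = (N : ℝ) - cnt N p := by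
    have : ((cnt N p + cnt N (fun n => ¬ p n) : ℕ) : ℝ) = (N:ℝ) := by exact_mod_cast h
    push_cast at this
    linarith
  rw [h2]
  field_simp

lemma reverse_zero {x : ℕ → ℝ}
    (hyp : ∀ m : ℕ, 1 ≤ m → ∀ d : ℕ → ℕ, 1 ≤ d 1 → d 1 ≤ 9 →
      (∀ j, 2 ≤ j → j ≤ m → d j ≤ 9) →
      Tendsto (fun N => dn N (fun n => ∀ j, 1 ≤ j → j ≤ m → D j (x n) = (d j : ℤ))) atTop
        (nhds (Real.logb 10 (1 + 1 / ∑ j ∈ Finset.Icc 1 m, (10:ℝ)^(m-j) * (d j : ℝ))))) :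
    Tendsto (fun N => dn N (fun n => S (x n) = 0)) atTop (nhds 0) := by
  have hfam := reverse_fam hyp 0 10 (by norm_num) (by norm_num)
  have hval : Real.logb 10 ((10:ℕ):ℝ) - Real.logb 10 ((10^0 : ℕ):ℝ) = 1 := by
    norm_num
  rw [hval] at hfam
  set q : ℕ → Prop := fun n =>
    ((10^0 : ℕ) : ℤ) ≤ ⌊(10:ℝ)^0 * S (x n)⌋ ∧ ⌊(10:ℝ)^0 * S (x n)⌋ < ((10:ℕ):ℤ) with hq
  have hle : ∀ N, dn N (fun n => S (x n) = 0) ≤ 1 - dn N q := by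
    intro N
    rcases Nat.eq_zero_or_pos N with h | h
    · rw [h, dn_zero, dn_zero]
      norm_num
    · rw [← dn_compl h q]
      apply dn_mono
      intro n hn
      rw [hq]
      simp only [hn]
      norm_num
  apply tendsto_dens_of_liminf_limsup
  · exact le_liminf_dens (g := fun _ => 0) (fun N => dn_nonneg N _) tendsto_const_nhds
  · have htend : Tendsto (fun N => 1 - dn N q) atTop (nhds 0) := by
      have := hfam.const_sub 1
      simpa using this
    exact limsup_dens_le hle htend

lemma ratio_tendsto {t : ℝ} (ht : 1 ≤ t) (c : ℝ) (hc0 : 0 ≤ c) (hc1 : c ≤ 1) :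
    Tendsto (fun p : ℕ => ((⌊(10:ℝ)^p * t⌋ : ℝ) + c)/10^p) atTop (nhds t) := by
  have hlow : ∀ p : ℕ, t - (1/10:ℝ)^p ≤ ((⌊(10:ℝ)^p * t⌋ : ℝ) + c)/10^p := by
    intro p
    have hp : (0:ℝ) < 10^p := by positivity
    rw [le_div_iff₀ hp]
    have h1 : (10:ℝ)^p * t - 1 < (⌊(10:ℝ)^p * t⌋ : ℝ) := by
      linarith [Int.lt_floor_add_one ((10:ℝ)^p * t)]
    have h2 : (1/10:ℝ)^p * 10^p = 1 := by
      rw [← mul_pow]; norm_num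
    nlinarith
  have hhigh : ∀ p : ℕ, ((⌊(10:ℝ)^p * t⌋ : ℝ) + c)/10^p ≤ t + (1/10:ℝ)^p := by
    intro p
    have hp : (0:ℝ) < 10^p := by positivity
    rw [div_le_iff₀ hp]
    have h1 : (⌊(10:ℝ)^p * t⌋ : ℝ) ≤ (10:ℝ)^p * t := Int.floor_le _
    have h2 : (1/10:ℝ)^p * 10^p = 1 := by
      rw [← mul_pow]; norm_num
    nlinarith
  have hpow : Tendsto (fun p : ℕ => (1/10:ℝ)^p) atTop (nhds 0) :=
    tendsto_pow_atTop_nhds_zero_of_lt_one (by norm_num) (by norm_num)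
  have hl : Tendsto (fun p : ℕ => t - (1/10:ℝ)^p) atTop (nhds t) := by
    have := hpow.const_sub t
    simpa using this
  have hh : Tendsto (fun p : ℕ => t + (1/10:ℝ)^p) atTop (nhds t) := by
    have := hpow.const_add t
    simpa using this
  exact tendsto_of_tendsto_of_tendsto_of_le_of_le hl hh hlow hhigh

lemma reverse_main {x : ℕ → ℝ}
    (hyp : ∀ m : ℕ, 1 ≤ m → ∀ d : ℕ → ℕ, 1 ≤ d 1 → d 1 ≤ 9 →
      (∀ j, 2 ≤ j → j ≤ m → d j ≤ 9) →
      Tendsto (fun N => dn N (fun n => ∀ j, 1 ≤ j → j ≤ m → D j (x n) = (d j : ℤ))) atTop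
        (nhds (Real.logb 10 (1 + 1 / ∑ j ∈ Finset.Icc 1 m, (10:ℝ)^(m-j) * (d j : ℝ)))))
    {t : ℝ} (ht1 : 1 ≤ t) (ht10 : t < 10) :
    Tendsto (fun N => dn N (fun n => S (x n) ≤ t)) atTop (nhds (Real.logb 10 t)) := by
  have ht0 : (0:ℝ) < t := by linarith
  set F : ℕ → ℤ := fun p => ⌊(10:ℝ)^p * t⌋ with hF
  have hF1 : ∀ p, ((10^p : ℕ) : ℤ) ≤ F p := by
    intro p
    rw [hF]
    apply Int.le_floor.mpr
    push_cast
    nlinarith [pow_pos (show (0:ℝ) < 10 by norm_num) p]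
  have hF2 : ∀ p, F p < ((10^(p+1) : ℕ) : ℤ) := by
    intro p
    rw [hF]
    apply Int.floor_lt.mpr
    push_cast
    rw [pow_succ]
    nlinarith [pow_pos (show (0:ℝ) < 10 by norm_num) p]
  set Lt : ℕ → ℕ := fun p => (F p).toNat with hLt
  have hLtF : ∀ p, ((Lt p : ℕ) : ℤ) = F p := by
    intro p
    rw [hLt]
    apply Int.toNat_of_nonneg
    calc (0:ℤ) ≤ ((10^p : ℕ) : ℤ) := by positivity
    _ ≤ F p := hF1 p
  have hLt1 : ∀ p, 10^p ≤ Lt p := by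
    intro p
    have := hF1 p
    rw [← hLtF p] at this
    exact_mod_cast this
  have hLt2 : ∀ p, Lt p + 1 ≤ 10^(p+1) := by
    intro p
    have := hF2 p
    rw [← hLtF p] at this
    omega
  have hLtr : ∀ p, ((Lt p : ℕ) : ℝ) = ((F p : ℤ) : ℝ) := by
    intro p
    rw [← hLtF p]
    push_cast
    rfl
  -- lower bound
  have hlow : ∀ p N, dn N (fun n =>
      ((10^p : ℕ) : ℤ) ≤ ⌊(10:ℝ)^p * S (x n)⌋ ∧ ⌊(10:ℝ)^p * S (x n)⌋ < ((Lt p : ℕ):ℤ))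
      ≤ dn N (fun n => S (x n) ≤ t) := by
    intro p N
    apply dn_mono
    rintro n ⟨h1, h2⟩
    have hp : (0:ℝ) < 10^p := by positivity
    have h3 : ⌊(10:ℝ)^p * S (x n)⌋ + 1 ≤ F p := by
      rw [← hLtF p]
      omega
    have h4 : (10:ℝ)^p * S (x n) < ((⌊(10:ℝ)^p * S (x n)⌋ : ℝ) + 1) :=
      Int.lt_floor_add_one _
    have h5 : ((⌊(10:ℝ)^p * S (x n)⌋ : ℝ) + 1) ≤ ((F p : ℤ) : ℝ) := by exact_mod_cast h3
    have h6 : ((F p : ℤ) : ℝ) ≤ (10:ℝ)^p * t := Int.floor_le _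
    nlinarith
  -- upper bound
  have hhigh : ∀ p N, dn N (fun n => S (x n) ≤ t)
      ≤ dn N (fun n =>
        ((10^p : ℕ) : ℤ) ≤ ⌊(10:ℝ)^p * S (x n)⌋ ∧ ⌊(10:ℝ)^p * S (x n)⌋ < ((Lt p + 1 : ℕ):ℤ))
        + dn N (fun n => S (x n) = 0) := by
    intro p N
    apply dn_add_le
    intro n hn
    rcases S_cases (x n) with h | h
    · exact Or.inr h
    · left
      have hp : (0:ℝ) < 10^p := by positivity
      constructor
      · apply Int.le_floor.mpr
        push_cast
        nlinarith
      · have h7 : ⌊(10:ℝ)^p * S (x n)⌋ ≤ F p := by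
          rw [hF]
          apply Int.floor_le_floor
          nlinarith
        rw [← hLtF p] at h7
        push_cast
        omega
  -- sequences of bounds
  have hseq : ∀ c : ℝ, 0 ≤ c → c ≤ 1 →
      Tendsto (fun p : ℕ => Real.logb 10 (((F p : ℤ):ℝ) + c) - Real.logb 10 ((10^p : ℕ):ℝ))
        atTop (nhds (Real.logb 10 t)) := by
    intro c hc0 hc1
    have heq : ∀ p : ℕ, Real.logb 10 (((F p : ℤ):ℝ) + c) - Real.logb 10 ((10^p : ℕ):ℝ)
        = Real.logb 10 ((((F p : ℤ):ℝ) + c)/10^p) := by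
      intro p
      have hp : (0:ℝ) < 10^p := by positivity
      have hFpos : (0:ℝ) < ((F p : ℤ):ℝ) := by
        have := hF1 p
        have h10 : (0:ℤ) < ((10^p : ℕ):ℤ) := by positivity
        exact_mod_cast lt_of_lt_of_le h10 this
      have hcast : ((10^p : ℕ):ℝ) = (10:ℝ)^p := by push_cast; rfl
      rw [hcast, ← Real.logb_div (by linarith) (by positivity)]
    simp only [heq]
    exact (continuousAt_logb' (by linarith)).tendsto.comp (ratio_tendsto ht1 c hc0 hc1)
  apply tendsto_dens_of_liminf_limsup
  · -- liminf
    apply le_of_tendsto' (hseq 0 le_rfl (by norm_num))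
    intro p
    have hfam := reverse_fam hyp p (Lt p) (hLt1 p) (by have := hLt2 p; omega)
    have : Real.logb 10 ((Lt p : ℕ):ℝ) = Real.logb 10 (((F p : ℤ):ℝ) + 0) := by
      rw [hLtr p, add_zero]
    rw [this] at hfam
    exact le_liminf_dens (fun N => hlow p N) hfam
  · -- limsup
    apply ge_of_tendsto' (hseq 1 (by norm_num) le_rfl)
    intro p
    have hfam := reverse_fam hyp p (Lt p + 1) (by have := hLt1 p; omega) (hLt2 p)
    have hz := reverse_zero hyp
    have hsum := hfam.add hz
    rw [add_zero] at hsum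
    have : Real.logb 10 ((Lt p + 1 : ℕ):ℝ) = Real.logb 10 (((F p : ℤ):ℝ) + 1) := by
      congr 1
      push_cast
      rw [← hLtr p]
    rw [this] at hsum
    exact limsup_dens_le (fun N => hhigh p N) hsum

lemma val_eq (p : ℕ) (d : ℕ → ℕ) (hd1 : 1 ≤ d 1) (hall : ∀ i, 1 ≤ i → i ≤ p+1 → d i ≤ 9) :
    Real.logb 10 (1 + 1 / ∑ j ∈ Finset.Icc 1 (p+1), (10:ℝ)^(p+1-j) * (d j : ℝ))
    = Real.logb 10 (((∑ i ∈ Finset.Icc 1 (p+1), d i * 10^(p+1-i) : ℕ):ℝ)+1)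
      - Real.logb 10 ((∑ i ∈ Finset.Icc 1 (p+1), d i * 10^(p+1-i) : ℕ):ℝ) := by
  obtain ⟨hK1, _⟩ := K_bounds p d hd1 hall
  have hKpos : (0:ℕ) < ∑ i ∈ Finset.Icc 1 (p+1), d i * 10^(p+1-i) :=
    lt_of_lt_of_le (Nat.pow_pos (by norm_num)) hK1
  have hKr : (0:ℝ) < ((∑ i ∈ Finset.Icc 1 (p+1), d i * 10^(p+1-i) : ℕ):ℝ) := by exact_mod_cast hKpos
  have hsr : ∑ j ∈ Finset.Icc 1 (p+1), (10:ℝ)^(p+1-j) * (d j : ℝ)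
      = ((∑ i ∈ Finset.Icc 1 (p+1), d i * 10^(p+1-i) : ℕ):ℝ) := by
    push_cast
    apply Finset.sum_congr rfl
    intro i _
    ring
  rw [hsr]
  have heq : 1 + 1/((∑ i ∈ Finset.Icc 1 (p+1), d i * 10^(p+1-i) : ℕ):ℝ)
      = (((∑ i ∈ Finset.Icc 1 (p+1), d i * 10^(p+1-i) : ℕ):ℝ)+1)
        / ((∑ i ∈ Finset.Icc 1 (p+1), d i * 10^(p+1-i) : ℕ):ℝ) := by
    rw [add_div, div_self (ne_of_gt hKr), add_comm]
  rw [heq, Real.logb_div (by linarith) (by linarith)]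

end BenfordAux

/-- A sequence of reals is Benford iff all finite blocks of leading
significant digits have the logarithmic limiting proportions. -/
theorem benfordSeq_iff_digit_frequencies (x : ℕ → ℝ) :
    BenfordSeq x ↔
      ∀ m : ℕ, 1 ≤ m → ∀ d : ℕ → ℕ,
        1 ≤ d 1 → d 1 ≤ 9 → (∀ j, 2 ≤ j → j ≤ m → d j ≤ 9) →
        Tendsto (fun N : ℕ =>
            (countIn N (fun n => ∀ j, 1 ≤ j → j ≤ m → D j (x n) = (d j : ℤ)) : ℝ) / N)
          atTop
          (nhds (Real.logb 10
            (1 + 1 / ∑ j ∈ Finset.Icc 1 m, (10 : ℝ) ^ (m - j) * (d j : ℝ)))) := by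
  constructor
  · intro hB m hm d hd1 hd9 hdall
    obtain ⟨p, rfl⟩ : ∃ p, m = p + 1 := ⟨m - 1, by omega⟩
    have hB2 : ∀ t : ℝ, 1 ≤ t → t < 10 →
        Tendsto (fun N => dn N (fun n => S (x n) ≤ t)) atTop (nhds (Real.logb 10 t)) := by
      intro t h1 h2
      have := hB t h1 h2
      simp only [countIn_eq_cnt] at this
      exact this
    have hall : ∀ i, 1 ≤ i → i ≤ p+1 → d i ≤ 9 := by
      intro i h1i h2i
      rcases eq_or_lt_of_le h1i with h | h
      · rw [← h]; exact hd9
      · exact hdall i (by omega) h2i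
    have hfb := forward_block hB2 p d hd1 hall
    rw [val_eq p d hd1 hall]
    simp only [countIn_eq_cnt]
    exact hfb
  · intro hyp t h1 h2
    have hyp2 : ∀ m : ℕ, 1 ≤ m → ∀ d : ℕ → ℕ, 1 ≤ d 1 → d 1 ≤ 9 →
        (∀ j, 2 ≤ j → j ≤ m → d j ≤ 9) →
        Tendsto (fun N => dn N (fun n => ∀ j, 1 ≤ j → j ≤ m → D j (x n) = (d j : ℤ))) atTop
          (nhds (Real.logb 10 (1 + 1 / ∑ j ∈ Finset.Icc 1 m, (10:ℝ)^(m-j) * (d j : ℝ)))) := by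
      intro m hm d a b c
      have := hyp m hm d a b c
      simp only [countIn_eq_cnt] at this
      exact this
    have := reverse_main hyp2 h1 h2
    simp only [countIn_eq_cnt]
    exact this
end

section
/- Let X_1, X_2, ... be independent positive real-valued random variables. If X_j is Benford for some j ∈ ℕ, then the product X_1 · X_2 · ... · X_m is Benford for every m ≥ j. -/
open MeasureTheory Filter

section Aux

open MeasureTheory Filter Set

lemma fract_add_right' (c y : ℝ) : Int.fract (c + y) = Int.fract (c + Int.fract y) := by
  have h : c + y = c + Int.fract y + (⌊y⌋ : ℤ) := by rw [Int.fract]; push_cast; ring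
  rw [h, Int.fract_add_intCast]

lemma S_le_iff' {x t : ℝ} (hx : 0 < x) (ht1 : 1 ≤ t) (ht10 : t < 10) :
    S x ≤ t ↔ Int.fract (Real.logb 10 x) ≤ Real.logb 10 t := by
  rw [S, if_neg hx.ne', abs_of_pos hx]
  nth_rewrite 1 [show t = (10:ℝ) ^ (Real.logb 10 t) from
    (Real.rpow_logb (by norm_num) (by norm_num) (by linarith)).symm]
  exact Real.rpow_le_rpow_left_iff (by norm_num)

lemma map_fract_eq' {Ω : Type*} [MeasurableSpace Ω] (μ : Measure Ω) [IsProbabilityMeasure μ]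
    (Y : Ω → ℝ) (hY : Measurable Y)
    (h : ∀ s : ℝ, 0 ≤ s → s < 1 → μ {ω | Int.fract (Y ω) ≤ s} = ENNReal.ofReal s) :
    μ.map (fun ω => Int.fract (Y ω)) = volume.restrict (Set.Ico 0 1) := by
  have hm : Measurable fun ω => Int.fract (Y ω) := measurable_fract.comp hY
  have hfin : IsFiniteMeasure (μ.map fun ω => Int.fract (Y ω)) := by
    constructor
    rw [Measure.map_apply hm MeasurableSet.univ]
    simp
  refine Measure.ext_of_Iic _ _ (fun a => ?_)
  rw [Measure.map_apply hm measurableSet_Iic, Measure.restrict_apply measurableSet_Iic]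
  rcases lt_or_ge a 0 with ha | ha
  · have h1 : (fun ω => Int.fract (Y ω)) ⁻¹' Set.Iic a = ∅ := by
      ext ω
      simp only [Set.mem_preimage, Set.mem_Iic, Set.mem_empty_iff_false, iff_false, not_le]
      linarith [Int.fract_nonneg (Y ω)]
    have h2 : Set.Iic a ∩ Set.Ico (0:ℝ) 1 = ∅ := by
      ext u
      simp only [Set.mem_inter_iff, Set.mem_Iic, Set.mem_Ico, Set.mem_empty_iff_false, iff_false,
        not_and]
      intro h1 h2
      linarith
    simp [h1, h2]
  rcases lt_or_ge a 1 with ha1 | ha1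
  · have h2 : Set.Iic a ∩ Set.Ico (0:ℝ) 1 = Set.Icc 0 a := by
      ext u
      simp only [Set.mem_inter_iff, Set.mem_Iic, Set.mem_Ico, Set.mem_Icc]
      constructor
      · rintro ⟨h1, h2, h3⟩; exact ⟨h2, h1⟩
      · rintro ⟨h1, h2⟩; exact ⟨h2, h1, by linarith⟩
    rw [h2, Real.volume_Icc]
    have := h a ha ha1
    rw [show (fun ω => Int.fract (Y ω)) ⁻¹' Set.Iic a = {ω | Int.fract (Y ω) ≤ a} from rfl, this]
    norm_num
  · have h1 : (fun ω => Int.fract (Y ω)) ⁻¹' Set.Iic a = Set.univ := by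
      ext ω
      simp only [Set.mem_preimage, Set.mem_Iic, Set.mem_univ, iff_true]
      linarith [Int.fract_lt_one (Y ω)]
    have h2 : Set.Iic a ∩ Set.Ico (0:ℝ) 1 = Set.Ico 0 1 := by
      ext u
      simp only [Set.mem_inter_iff, Set.mem_Iic, Set.mem_Ico]
      constructor
      · rintro ⟨_, h2⟩; exact h2
      · rintro ⟨h2, h3⟩; exact ⟨by linarith, h2, h3⟩
    rw [h1, h2, Real.volume_Ico]
    simp

lemma fract_shift_measure' {Ω : Type*} [MeasurableSpace Ω] (μ : Measure Ω)
    [IsProbabilityMeasure μ] (Y : Ω → ℝ) (hY : Measurable Y)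
    (h : ∀ s : ℝ, 0 ≤ s → s < 1 → μ {ω | Int.fract (Y ω) ≤ s} = ENNReal.ofReal s)
    (c s : ℝ) (hs0 : 0 ≤ s) (hs1 : s < 1) :
    μ {ω | Int.fract (c + Y ω) ≤ s} = ENNReal.ofReal s := by
  have hmap := map_fract_eq' μ Y hY h
  have hA : MeasurableSet {u : ℝ | Int.fract (c + u) ≤ s} :=
    measurableSet_le (measurable_fract.comp (measurable_const.add measurable_id)) measurable_const
  have key : μ {ω | Int.fract (c + Y ω) ≤ s}
      = (μ.map (fun ω => Int.fract (Y ω))) {u | Int.fract (c + u) ≤ s} := by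
    have hm2 : Measurable fun ω => Int.fract (Y ω) := measurable_fract.comp hY
    rw [Measure.map_apply hm2 hA]
    congr 1
    ext ω
    simp only [Set.mem_setOf_eq, Set.mem_preimage, fract_add_right' c (Y ω)]
  rw [key, hmap, Measure.restrict_apply hA]
  set r := Int.fract c with hrdef
  have hr0 : 0 ≤ r := Int.fract_nonneg c
  have hr1 : r < 1 := Int.fract_lt_one c
  have hcu : ∀ u : ℝ, Int.fract (c + u) = Int.fract (r + u) := by
    intro u
    rw [add_comm c u, fract_add_right' u c, add_comm]
  have hfr1 : ∀ u : ℝ, 0 ≤ r + u → r + u < 1 → Int.fract (r + u) = r + u :=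
    fun u h1 h2 => Int.fract_eq_self.2 ⟨h1, h2⟩
  have hfr2 : ∀ u : ℝ, 1 ≤ r + u → r + u < 2 → Int.fract (r + u) = r + u - 1 := by
    intro u h1 h2
    have : r + u = (r + u - 1) + ((1:ℤ):ℝ) := by push_cast; ring
    conv_lhs => rw [this]
    rw [Int.fract_add_intCast]
    exact Int.fract_eq_self.2 ⟨by linarith, by linarith⟩
  rcases le_or_gt r s with hrs | hrs
  · have hset : {u : ℝ | Int.fract (c + u) ≤ s} ∩ Set.Ico 0 1
        = Set.Icc 0 (s - r) ∪ Set.Ico (1 - r) 1 := by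
      ext u
      simp only [Set.mem_inter_iff, Set.mem_setOf_eq, Set.mem_Ico, Set.mem_Icc, Set.mem_union,
        hcu u]
      constructor
      · rintro ⟨hle, hu0, hu1⟩
        rcases lt_or_ge (r + u) 1 with hlt | hge
        · left
          rw [hfr1 u (by linarith) hlt] at hle
          exact ⟨hu0, by linarith⟩
        · right
          exact ⟨by linarith, hu1⟩
      · rintro (⟨h0, h1⟩ | ⟨h0, h1⟩)
        · rw [hfr1 u (by linarith) (by linarith)]
          exact ⟨by linarith, h0, by linarith⟩
        · rw [hfr2 u (by linarith) (by linarith)]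
          exact ⟨by linarith, by linarith, h1⟩
    rw [hset, measure_union ?_ measurableSet_Ico, Real.volume_Icc, Real.volume_Ico,
      ← ENNReal.ofReal_add (by linarith) (by linarith)]
    · congr 1; ring
    · rw [Set.disjoint_left]
      rintro u ⟨hu0, hu1⟩ ⟨hu2, hu3⟩
      linarith
  · have hset : {u : ℝ | Int.fract (c + u) ≤ s} ∩ Set.Ico 0 1
        = Set.Icc (1 - r) (s + 1 - r) := by
      ext u
      simp only [Set.mem_inter_iff, Set.mem_setOf_eq, Set.mem_Ico, Set.mem_Icc, hcu u]
      constructor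
      · rintro ⟨hle, hu0, hu1⟩
        rcases lt_or_ge (r + u) 1 with hlt | hge
        · rw [hfr1 u (by linarith) hlt] at hle
          exfalso; linarith
        · rw [hfr2 u hge (by linarith)] at hle
          exact ⟨by linarith, by linarith⟩
      · rintro ⟨h0, h1⟩
        rw [hfr2 u (by linarith) (by linarith)]
        exact ⟨by linarith, by linarith, by linarith⟩
    rw [hset, Real.volume_Icc]
    congr 1; ring

lemma fract_sum_unif' {Ω : Type*} [MeasurableSpace Ω] (μ : Measure Ω) [IsProbabilityMeasure μ]
    (Y Z : Ω → ℝ) (hY : Measurable Y) (hZ : Measurable Z)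
    (hind : ProbabilityTheory.IndepFun Z Y μ)
    (h : ∀ s : ℝ, 0 ≤ s → s < 1 → μ {ω | Int.fract (Y ω) ≤ s} = ENNReal.ofReal s)
    (s : ℝ) (hs0 : 0 ≤ s) (hs1 : s < 1) :
    μ {ω | Int.fract (Z ω + Y ω) ≤ s} = ENNReal.ofReal s := by
  have hprod := (ProbabilityTheory.indepFun_iff_map_prod_eq_prod_map_map
    hZ.aemeasurable hY.aemeasurable).1 hind
  have hA : MeasurableSet {p : ℝ × ℝ | Int.fract (p.1 + p.2) ≤ s} :=
    measurableSet_le (measurable_fract.comp (measurable_fst.add measurable_snd)) measurable_const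
  have h1 : μ {ω | Int.fract (Z ω + Y ω) ≤ s}
      = (μ.map fun ω => (Z ω, Y ω)) {p : ℝ × ℝ | Int.fract (p.1 + p.2) ≤ s} := by
    rw [Measure.map_apply (hZ.prodMk hY) hA]
    rfl
  rw [h1, hprod, Measure.prod_apply hA]
  have h2 : ∀ z : ℝ, (μ.map Y) (Prod.mk z ⁻¹' {p : ℝ × ℝ | Int.fract (p.1 + p.2) ≤ s})
      = ENNReal.ofReal s := by
    intro z
    have he : Prod.mk z ⁻¹' {p : ℝ × ℝ | Int.fract (p.1 + p.2) ≤ s}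
        = {y : ℝ | Int.fract (z + y) ≤ s} := rfl
    have hBz : MeasurableSet {y : ℝ | Int.fract (z + y) ≤ s} :=
      measurableSet_le (measurable_fract.comp (measurable_const.add measurable_id))
        measurable_const
    rw [he, Measure.map_apply hY hBz]
    exact fract_shift_measure' μ Y hY h z s hs0 hs1
  simp_rw [h2]
  rw [lintegral_const]
  have h3 : (μ.map Z) Set.univ = 1 := by
    rw [Measure.map_apply hZ MeasurableSet.univ]
    simp
  rw [h3, mul_one]

end Aux

/-- If `X₁, X₂, …` are independent positive random variables and `X j`
is Benford, then `X₁ ⋯ X m` is Benford for every `m ≥ j`. -/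
theorem benfordRV_prod_of_indep {Ω : Type*} [MeasurableSpace Ω]
    (μ : Measure Ω) [IsProbabilityMeasure μ] (X : ℕ → Ω → ℝ)
    (hmeas : ∀ i, Measurable (X i))
    (hindep : ProbabilityTheory.iIndepFun X μ)
    (hpos : ∀ i ω, 0 < X i ω)
    (j : ℕ) (hj : 1 ≤ j) (hXj : BenfordRV μ (X j))
    (m : ℕ) (hm : j ≤ m) :
    BenfordRV μ (fun ω => ∏ i ∈ Finset.Icc 1 m, X i ω) := by
  intro t ht1 ht10
  have hjmem : j ∈ Finset.Icc 1 m := Finset.mem_Icc.2 ⟨hj, hm⟩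
  set P := fun ω => ∏ i ∈ (Finset.Icc 1 m).erase j, X i ω with hPdef
  have hPpos : ∀ ω, 0 < P ω := fun ω => Finset.prod_pos (fun i _ => hpos i ω)
  have hprod_eq : ∀ ω, (∏ i ∈ Finset.Icc 1 m, X i ω) = X j ω * P ω :=
    fun ω => (Finset.mul_prod_erase _ _ hjmem).symm
  have hlogb_meas : Measurable (Real.logb 10) := Real.measurable_log.div_const _
  set Y := fun ω => Real.logb 10 (X j ω) with hYdef
  set Z := fun ω => Real.logb 10 (P ω) with hZdef
  have hYm : Measurable Y := hlogb_meas.comp (hmeas j)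
  have hPm : Measurable P :=
    Finset.measurable_prod _ (fun i _ => hmeas i)
  have hZm : Measurable Z := hlogb_meas.comp hPm
  have hindP : ProbabilityTheory.IndepFun P (X j) μ := by
    have := hindep.indepFun_finsetProd_of_notMem hmeas
      (Finset.notMem_erase j (Finset.Icc 1 m))
    have he : (∏ i ∈ (Finset.Icc 1 m).erase j, X i) = P := by
      funext ω
      rw [hPdef]
      simp [Finset.prod_apply]
    rwa [he] at this
  have hindZY : ProbabilityTheory.IndepFun Z Y μ :=
    hindP.comp hlogb_meas hlogb_meas
  have hYunif : ∀ s : ℝ, 0 ≤ s → s < 1 →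
      μ {ω | Int.fract (Y ω) ≤ s} = ENNReal.ofReal s := by
    intro s hs0 hs1
    set u := (10:ℝ) ^ s with hudef
    have hu1 : 1 ≤ u := by
      rw [hudef, show (1:ℝ) = (10:ℝ) ^ (0:ℝ) by rw [Real.rpow_zero]]
      exact (Real.rpow_le_rpow_left_iff (by norm_num)).2 hs0
    have hu10 : u < 10 := by
      rw [hudef]
      nth_rewrite 2 [show (10:ℝ) = (10:ℝ) ^ (1:ℝ) by rw [Real.rpow_one]]
      exact (Real.rpow_lt_rpow_left_iff (by norm_num)).2 hs1
    have hlogu : Real.logb 10 u = s := Real.logb_rpow (by norm_num) (by norm_num)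
    have := hXj u hu1 hu10
    rw [hlogu] at this
    rw [← this]
    congr 1
    ext ω
    simp only [Set.mem_setOf_eq, hYdef]
    rw [← hlogu, S_le_iff' (hpos j ω) hu1 hu10]
  set s := Real.logb 10 t with hsdef
  have hs0 : 0 ≤ s := Real.logb_nonneg (by norm_num) ht1
  have hs1 : s < 1 := by
    have := Real.logb_lt_logb (b := 10) (by norm_num) (by linarith : (0:ℝ) < t) ht10
    rwa [Real.logb_self_eq_one (by norm_num)] at this
  have hkey := fract_sum_unif' μ Y Z hYm hZm hindZY hYunif s hs0 hs1
  rw [← hkey]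
  congr 1
  ext ω
  simp only [Set.mem_setOf_eq]
  rw [S_le_iff' (Finset.prod_pos (fun i _ => hpos i ω)) ht1 ht10, hprod_eq ω,
    Real.logb_mul (hpos j ω).ne' (hPpos ω).ne', add_comm]
end

section
/- For all real numbers a and b with a ≠ 0, the sequence (a · n^b)_{n≥1} = (a, a·2^b, a·3^b, ...) is not a Benford sequence. -/
open MeasureTheory Filter

lemma countIn_eq_of_gap (p : ℕ → Prop) (N M : ℕ) (hNM : N ≤ M)
    (h : ∀ n, N < n → n ≤ M → ¬ p n) : countIn M p = countIn N p := by
  unfold countIn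
  have hset : {n : ℕ | 1 ≤ n ∧ n ≤ M ∧ p n} = {n : ℕ | 1 ≤ n ∧ n ≤ N ∧ p n} := by
    ext n
    simp only [Set.mem_setOf_eq]
    constructor
    · rintro ⟨h1, h2, h3⟩
      refine ⟨h1, ?_, h3⟩
      by_contra hn
      exact h n (Nat.lt_of_not_le hn) h2 h3
    · rintro ⟨h1, h2, h3⟩
      exact ⟨h1, h2.trans hNM, h3⟩
  rw [hset]

lemma no_tendsto_of_gaps (p : ℕ → Prop) (δ : ℝ) (hδ : 0 < δ)
    (h : Tendsto (fun N : ℕ => (countIn N p : ℝ) / N) atTop (nhds δ))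
    (lam : ℝ) (hlam : 1 < lam)
    (hgap : ∀ j : ℕ, ∃ N M : ℕ, j ≤ N ∧ lam * N ≤ M ∧ ∀ n, N < n → n ≤ M → ¬ p n) :
    False := by
  choose N M hN hM hnp using hgap
  have hNM : ∀ j, N j ≤ M j := by
    intro j
    have h1 : (N j : ℝ) ≤ lam * N j := by
      nlinarith [(Nat.cast_nonneg (N j) : (0:ℝ) ≤ (N j : ℝ))]
    exact_mod_cast h1.trans (hM j)
  have htN : Tendsto N atTop atTop := tendsto_atTop_mono hN tendsto_id
  have htM : Tendsto M atTop atTop := tendsto_atTop_mono (fun j => (hN j).trans (hNM j)) tendsto_id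
  have h1 : Tendsto (fun j => (countIn (M j) p : ℝ) / M j) atTop (nhds δ) := h.comp htM
  have h2 : Tendsto (fun j => (countIn (N j) p : ℝ) / N j / lam) atTop (nhds (δ / lam)) :=
    (h.comp htN).div_const lam
  have hle : ∀ᶠ j in atTop, (countIn (M j) p : ℝ) / M j ≤ (countIn (N j) p : ℝ) / N j / lam := by
    filter_upwards [htN.eventually_gt_atTop 0] with j hj
    have hNpos : (0:ℝ) < N j := by exact_mod_cast hj
    have hMpos : (0:ℝ) < lam * N j := by positivity
    have hcount : countIn (M j) p = countIn (N j) p :=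
      countIn_eq_of_gap p (N j) (M j) (hNM j) (hnp j)
    rw [hcount, div_div, mul_comm (N j : ℝ) lam]
    exact div_le_div_of_nonneg_left (by positivity) hMpos (hM j)
  have hfinal : δ ≤ δ / lam := le_of_tendsto_of_tendsto h1 h2 hle
  linarith [div_lt_self hδ hlam]

lemma fract_bound (a b : ℝ) (ha : a ≠ 0) (k : ℤ) (n : ℕ) (hn : 1 ≤ n)
    (h1 : (k : ℝ) + Real.logb 10 2 < Real.logb 10 |a| + b * Real.logb 10 n)
    (h2 : Real.logb 10 |a| + b * Real.logb 10 n < (k : ℝ) + 1) :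
    ¬ S (a * (n : ℝ) ^ b) ≤ 2 := by
  have hnpos : (0:ℝ) < n := by exact_mod_cast hn
  have hrp : (0:ℝ) < (n:ℝ) ^ b := Real.rpow_pos_of_pos hnpos b
  have hx : a * (n:ℝ) ^ b ≠ 0 := mul_ne_zero ha (ne_of_gt hrp)
  have habs : |a * (n:ℝ) ^ b| = |a| * (n:ℝ) ^ b := by
    rw [abs_mul, abs_of_pos hrp]
  have hlog : Real.logb 10 |a * (n:ℝ) ^ b| = Real.logb 10 |a| + b * Real.logb 10 n := by
    rw [habs, Real.logb_mul (abs_ne_zero.2 ha) (ne_of_gt hrp)]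
    congr 1
    unfold Real.logb
    rw [Real.log_rpow hnpos]
    ring
  have hs : (0:ℝ) < Real.logb 10 2 := Real.logb_pos (by norm_num) (by norm_num)
  have hfloor : ⌊Real.logb 10 |a * (n:ℝ) ^ b|⌋ = k := by
    rw [Int.floor_eq_iff, hlog]
    constructor <;> linarith
  have hfract : Real.logb 10 2 < Int.fract (Real.logb 10 |a * (n:ℝ) ^ b|) := by
    rw [Int.fract, hfloor, hlog]
    linarith
  have hS : S (a * (n:ℝ) ^ b) = (10:ℝ) ^ Int.fract (Real.logb 10 |a * (n:ℝ) ^ b|) := by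
    simp [S, hx]
  rw [hS]
  push_neg
  calc (2:ℝ) = (10:ℝ) ^ Real.logb 10 2 := by
        rw [Real.rpow_logb (by norm_num) (by norm_num) (by norm_num)]
    _ < _ := by
        rw [Real.rpow_lt_rpow_left_iff (by norm_num : (1:ℝ) < 10)]
        exact hfract

lemma NM_of_LU (p : ℕ → Prop) (j : ℕ) (lam lam0 L U : ℝ)
    (hlam : lam = (1 + lam0) / 2) (hlam0 : 1 < lam0)
    (hU : U = lam0 * L) (hLj : (j : ℝ) ≤ L) (hL4 : 4 / (lam0 - 1) ≤ L) (hL1 : 1 ≤ L)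
    (havoid : ∀ n : ℕ, L < n → (n : ℝ) < U → ¬ p n) :
    ∃ N M : ℕ, j ≤ N ∧ lam * N ≤ M ∧ ∀ n, N < n → n ≤ M → ¬ p n := by
  have hL0 : (0:ℝ) ≤ L := by linarith
  have hU1 : (1:ℝ) ≤ U := by nlinarith
  refine ⟨⌊L⌋₊, ⌊U⌋₊ - 1, Nat.le_floor hLj, ?_, ?_⟩
  · have hfU : 1 ≤ ⌊U⌋₊ := Nat.le_floor (by exact_mod_cast hU1)
    have hcast : ((⌊U⌋₊ - 1 : ℕ) : ℝ) = (⌊U⌋₊ : ℝ) - 1 := by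
      rw [Nat.cast_sub hfU]; norm_num
    have hfloorU : U - 1 < (⌊U⌋₊ : ℝ) := by
      have := Nat.lt_floor_add_one U
      linarith
    have hNL : ((⌊L⌋₊ : ℕ) : ℝ) ≤ L := Nat.floor_le hL0
    rw [hcast]
    have hlampos : 0 < lam := by rw [hlam]; linarith
    have h1 : lam * (⌊L⌋₊ : ℝ) ≤ lam * L := by
      exact mul_le_mul_of_nonneg_left hNL (le_of_lt hlampos)
    -- lam * L ≤ lam0 * L - 2 since (lam0 - lam) * L = (lam0-1)/2 * L ≥ 2
    have h2 : lam * L ≤ lam0 * L - 2 := by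
      have : (lam0 - lam) * L ≥ 2 := by
        rw [hlam]
        have h3 : (lam0 - 1) / 2 * L ≥ 2 := by
          have hpos : (0:ℝ) < lam0 - 1 := by linarith
          have h5 := mul_le_mul_of_nonneg_left hL4 (le_of_lt hpos)
          have h4 : (lam0 - 1) * (4 / (lam0 - 1)) = 4 := by field_simp
          nlinarith
        nlinarith
      linarith
    linarith [hU ▸ hfloorU]
  · intro n hNn hnM
    have hn1 : 1 ≤ n := Nat.one_le_iff_ne_zero.mpr (by omega)
    have hLn : L < n := by
      have := (Nat.floor_lt hL0).1 hNn
      exact this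
    have hnU : (n : ℝ) < U := by
      have h1 : n < ⌊U⌋₊ := by omega
      have h2 : ((n:ℕ) : ℝ) < (⌊U⌋₊ : ℝ) := by exact_mod_cast h1
      exact h2.trans_le (Nat.floor_le (by linarith))
    exact havoid n hLn hnU


/-- No sequence `(a * n ^ b)` is Benford. -/
theorem not_benfordSeq_rpow (a b : ℝ) (ha : a ≠ 0) :
    ¬ BenfordSeq (fun n => a * (n : ℝ) ^ b) := by
  intro hB
  by_cases hb : b = 0
  · subst hb
    have hS0 : ∀ n : ℕ, S (a * (n:ℝ) ^ (0:ℝ)) = S a := by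
      intro n; rw [Real.rpow_zero, mul_one]
    by_cases hc : S a ≤ 2
    · have h2 := hB 2 (by norm_num) (by norm_num)
      have h3 := hB 3 (by norm_num) (by norm_num)
      have e : (fun N : ℕ => (countIn N (fun n => S (a * (n:ℝ) ^ (0:ℝ)) ≤ 2) : ℝ) / N)
          = (fun N : ℕ => (countIn N (fun n => S (a * (n:ℝ) ^ (0:ℝ)) ≤ 3) : ℝ) / N) := by
        funext N
        have hset : {n : ℕ | 1 ≤ n ∧ n ≤ N ∧ S (a * (n:ℝ) ^ (0:ℝ)) ≤ 2}
            = {n : ℕ | 1 ≤ n ∧ n ≤ N ∧ S (a * (n:ℝ) ^ (0:ℝ)) ≤ 3} := by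
          ext n
          simp [hS0 n, hc, hc.trans (by norm_num : (2:ℝ) ≤ 3)]
        simp only [countIn, hset]
      rw [e] at h2
      have := tendsto_nhds_unique h2 h3
      have hlt : Real.logb 10 2 < Real.logb 10 3 :=
        Real.logb_lt_logb (by norm_num) (by norm_num) (by norm_num)
      linarith
    · have h1 := hB 1 (le_refl 1) (by norm_num)
      have h2 := hB 2 (by norm_num) (by norm_num)
      have hc1 : ¬ S a ≤ 1 := fun h => hc (h.trans (by norm_num))
      have e : (fun N : ℕ => (countIn N (fun n => S (a * (n:ℝ) ^ (0:ℝ)) ≤ 1) : ℝ) / N)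
          = (fun N : ℕ => (countIn N (fun n => S (a * (n:ℝ) ^ (0:ℝ)) ≤ 2) : ℝ) / N) := by
        funext N
        have hset : {n : ℕ | 1 ≤ n ∧ n ≤ N ∧ S (a * (n:ℝ) ^ (0:ℝ)) ≤ 1}
            = {n : ℕ | 1 ≤ n ∧ n ≤ N ∧ S (a * (n:ℝ) ^ (0:ℝ)) ≤ 2} := by
          ext n
          simp [hS0 n, hc, hc1]
        simp only [countIn, hset]
      rw [e] at h1
      have := tendsto_nhds_unique h1 h2
      have hpos : 0 < Real.logb 10 2 := Real.logb_pos (by norm_num) (by norm_num)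
      rw [Real.logb_one] at this
      linarith
  · -- b ≠ 0
    set c : ℝ := Real.logb 10 |a| with hc
    set s : ℝ := Real.logb 10 2 with hsdef
    have hs0 : 0 < s := Real.logb_pos (by norm_num) (by norm_num)
    have hs1 : s < 1 := by
      have : Real.logb 10 2 < Real.logb 10 10 :=
        Real.logb_lt_logb (by norm_num) (by norm_num) (by norm_num)
      rwa [Real.logb_self_eq_one (by norm_num : (1:ℝ) < 10)] at this
    set lam0 : ℝ := (10:ℝ) ^ ((1 - s) / |b|) with hlam0def
    have hbabs : 0 < |b| := abs_pos.mpr hb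
    have hlam0 : 1 < lam0 := by
      rw [hlam0def]
      have : (0:ℝ) < (1 - s) / |b| := div_pos (by linarith) hbabs
      calc (1:ℝ) = (10:ℝ) ^ (0:ℝ) := by rw [Real.rpow_zero]
        _ < _ := by
          rw [Real.rpow_lt_rpow_left_iff (by norm_num : (1:ℝ) < 10)]
          exact this
    set lam : ℝ := (1 + lam0) / 2 with hlamdef
    have hlam : 1 < lam := by rw [hlamdef]; linarith
    refine no_tendsto_of_gaps (fun n => S (a * (n:ℝ) ^ b) ≤ 2) s hs0
      (hB 2 (by norm_num) (by norm_num)) lam hlam ?_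
    intro j
    -- the threshold: L must be at least R
    set R : ℝ := max (max (j:ℝ) (4 / (lam0 - 1))) 1 with hRdef
    have hR1 : 1 ≤ R := le_max_right _ _
    have hRj : (j:ℝ) ≤ R := le_trans (le_max_left _ _) (le_max_left _ _)
    have hR4 : 4 / (lam0 - 1) ≤ R := le_trans (le_max_right _ _) (le_max_left _ _)
    have hR0 : 0 < R := lt_of_lt_of_le one_pos hR1
    rcases lt_or_gt_of_ne hb with hbneg | hbpos
    · -- b < 0
      set k : ℤ := ⌊b * Real.logb 10 R + c - 1⌋ with hkdef
      set L : ℝ := (10:ℝ) ^ (((k:ℝ) + 1 - c) / b) with hLdef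
      set U : ℝ := (10:ℝ) ^ (((k:ℝ) + s - c) / b) with hUdef
      have hexp : ((k:ℝ) + s - c) / b = ((k:ℝ) + 1 - c) / b + (1 - s) / |b| := by
        rw [abs_of_neg hbneg, div_neg, ← sub_eq_add_neg, div_sub_div_same]
        congr 1
        ring
      have hUL : U = lam0 * L := by
        rw [hUdef, hLdef, hlam0def, hexp, Real.rpow_add (by norm_num), mul_comm]
      have hRL : R ≤ L := by
        rw [hLdef]
        have hk : (k:ℝ) ≤ b * Real.logb 10 R + c - 1 := Int.floor_le _
        have hexp2 : Real.logb 10 R ≤ ((k:ℝ) + 1 - c) / b := by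
          rw [le_div_iff_of_neg hbneg]
          nlinarith
        calc R = (10:ℝ) ^ Real.logb 10 R := by
              rw [Real.rpow_logb (by norm_num) (by norm_num) hR0]
          _ ≤ _ := by
              apply Real.rpow_le_rpow_left_iff (by norm_num : (1:ℝ) < 10) |>.mpr hexp2
      refine NM_of_LU _ j lam lam0 L U hlamdef hlam0 hUL (hRj.trans hRL)
        (hR4.trans hRL) (hR1.trans hRL) ?_
      intro n hLn hnU
      have hn1 : 1 ≤ n := by
        by_contra h
        push_neg at h
        interval_cases n
        · simp at hLn; linarith [hR1.trans hRL]
      have hnpos : (0:ℝ) < n := by exact_mod_cast hn1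
      have hlogL : ((k:ℝ) + 1 - c) / b < Real.logb 10 n := by
        have := Real.logb_lt_logb (by norm_num : (1:ℝ) < 10)
          (Real.rpow_pos_of_pos (by norm_num) _) hLn
        rwa [Real.logb_rpow (by norm_num) (by norm_num)] at this
      have hlogU : Real.logb 10 n < ((k:ℝ) + s - c) / b := by
        have := Real.logb_lt_logb (by norm_num : (1:ℝ) < 10) hnpos hnU
        rwa [Real.logb_rpow (by norm_num) (by norm_num)] at this
      apply fract_bound a b ha k n hn1
      · have := (lt_div_iff_of_neg hbneg).1 hlogU
        rw [← hsdef, ← hc]; nlinarith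
      · have := (div_lt_iff_of_neg hbneg).1 hlogL
        rw [← hc]; nlinarith
    · -- b > 0
      set k : ℤ := ⌈b * Real.logb 10 R + c - s⌉ with hkdef
      set L : ℝ := (10:ℝ) ^ (((k:ℝ) + s - c) / b) with hLdef
      set U : ℝ := (10:ℝ) ^ (((k:ℝ) + 1 - c) / b) with hUdef
      have hexp : ((k:ℝ) + 1 - c) / b = ((k:ℝ) + s - c) / b + (1 - s) / |b| := by
        rw [abs_of_pos hbpos, ← add_div]
        congr 1
        ring
      have hUL : U = lam0 * L := by
        rw [hUdef, hLdef, hlam0def, hexp, Real.rpow_add (by norm_num), mul_comm]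
      have hRL : R ≤ L := by
        rw [hLdef]
        have hk : b * Real.logb 10 R + c - s ≤ (k:ℝ) := Int.le_ceil _
        have hexp2 : Real.logb 10 R ≤ ((k:ℝ) + s - c) / b := by
          rw [le_div_iff₀ hbpos]
          nlinarith
        calc R = (10:ℝ) ^ Real.logb 10 R := by
              rw [Real.rpow_logb (by norm_num) (by norm_num) hR0]
          _ ≤ _ := by
              apply Real.rpow_le_rpow_left_iff (by norm_num : (1:ℝ) < 10) |>.mpr hexp2
      refine NM_of_LU _ j lam lam0 L U hlamdef hlam0 hUL (hRj.trans hRL)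
        (hR4.trans hRL) (hR1.trans hRL) ?_
      intro n hLn hnU
      have hn1 : 1 ≤ n := by
        by_contra h
        push_neg at h
        interval_cases n
        · simp at hLn; linarith [hR1.trans hRL]
      have hnpos : (0:ℝ) < n := by exact_mod_cast hn1
      have hlogL : ((k:ℝ) + s - c) / b < Real.logb 10 n := by
        have := Real.logb_lt_logb (by norm_num : (1:ℝ) < 10)
          (Real.rpow_pos_of_pos (by norm_num) _) hLn
        rwa [Real.logb_rpow (by norm_num) (by norm_num)] at this
      have hlogU : Real.logb 10 n < ((k:ℝ) + 1 - c) / b := by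
        have := Real.logb_lt_logb (by norm_num : (1:ℝ) < 10) hnpos hnU
        rwa [Real.logb_rpow (by norm_num) (by norm_num)] at this
      apply fract_bound a b ha k n hn1
      · have := (div_lt_iff₀ hbpos).1 hlogL
        rw [← hsdef, ← hc]; linarith
      · have := (lt_div_iff₀ hbpos).1 hlogU
        rw [← hc]; linarith
end
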